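/- arXiv:2301.08309 — 3 statements merged into one kernel-verified Lean document; each statement's English description precedes it below -/
import Mathlib

section
/- Let α ∈ (−1, ∞), ε > 0 and R > 0. Then ∫_{B_R(0)} ε·|x|^{2α} · (ε + |x|^{2(1+α)})^{−2} dx = (π/(1+α)) · R^{2(1+α)} / (ε + R^{2(1+α)}), where the integral is over the open Euclidean ball B_R(0) ⊂ ℝ². -/
open MeasureTheory Real

lemma measurable_rpow_const_aux (q : ℝ) : Measurable fun y : ℝ => y ^ q := by
  apply measurable_of_continuousOn_compl_singleton (0 : ℝ)
  intro y hy
  exact (Real.continuousAt_rpow_const y q (Or.inl hy)).continuousWithinAt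

lemma aux_1d (α ε R : ℝ) (hα : -1 < α) (hε : 0 < ε) (hR : 0 < R) :
    (∫ y in Set.Ioo (0:ℝ) R, y * (ε * y ^ (2 * α) / (ε + y ^ (2 * (1 + α))) ^ 2))
      = (1 / (2 * (1 + α))) * R ^ (2 * (1 + α)) / (ε + R ^ (2 * (1 + α))) := by
  have h1α : (0:ℝ) < 1 + α := by linarith
  set p : ℝ := 2 * (1 + α) with hp
  have hppos : 0 < p := by positivity
  set f : ℝ → ℝ := fun y => y * (ε * y ^ (2 * α) / (ε + y ^ p) ^ 2) with hf
  set F : ℝ → ℝ := fun y => -(ε / (2 * (1 + α))) * (ε + y ^ p)⁻¹ with hF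
  have hDpos : ∀ y : ℝ, 0 ≤ y → 0 < ε + y ^ p := fun y hy =>
    add_pos_of_pos_of_nonneg hε (Real.rpow_nonneg hy _)
  have hcont : ContinuousOn F (Set.Icc 0 R) := by
    apply ContinuousOn.mul continuousOn_const
    apply ContinuousOn.inv₀
    · exact continuousOn_const.add (fun y hy =>
        ((Real.continuousAt_rpow_const y p (Or.inr hppos.le)).continuousWithinAt))
    · exact fun y hy => (hDpos y hy.1).ne'
  have hderiv : ∀ y ∈ Set.Ioo (0:ℝ) R, HasDerivWithinAt F (f y) (Set.Ioi y) y := by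
    intro y hy
    have hy0 : 0 < y := hy.1
    have h1 : HasDerivAt (fun y : ℝ => ε + y ^ p) (p * y ^ (p - 1)) y := by
      simpa using (Real.hasDerivAt_rpow_const (p := p) (Or.inl hy0.ne')).const_add ε
    have h2 := (h1.inv (hDpos y hy0.le).ne').const_mul (-(ε / (2 * (1 + α))))
    convert h2.hasDerivWithinAt using 1
    case e'_4 => rfl
    case e'_5 => rfl
    case e'_8 => rfl
    have hsplit : y ^ (p - 1) = y ^ (2 * α) * y := by
      rw [show p - 1 = 2 * α + 1 by rw [hp]; ring, Real.rpow_add hy0, Real.rpow_one]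
    rw [hf]
    simp only [hsplit]
    field_simp
    ring
  have hint : IntervalIntegrable f volume 0 R := by
    have hg : IntervalIntegrable (fun y : ℝ => ε⁻¹ * y ^ (2 * α + 1)) volume 0 R :=
      (intervalIntegral.intervalIntegrable_rpow' (by linarith)).const_mul _
    apply hg.mono_fun
    · apply Measurable.aestronglyMeasurable
      apply Measurable.mul measurable_id
      apply Measurable.div
      · exact (measurable_rpow_const_aux (2*α)).const_mul ε
      · exact ((measurable_rpow_const_aux (2*(1+α))).const_add ε).pow_const 2
    · filter_upwards [ae_restrict_mem measurableSet_uIoc] with y hy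
      rw [Set.uIoc_of_le hR.le] at hy
      have hy0 : 0 < y := hy.1
      have hD := hDpos y hy0.le
      rw [Real.norm_eq_abs, Real.norm_eq_abs]
      have hfnn : 0 ≤ f y := by
        rw [hf]
        positivity
      rw [abs_of_nonneg hfnn, abs_of_nonneg (by positivity)]
      have hsplit : y * (ε * y ^ (2 * α)) = ε * y ^ (2 * α + 1) := by
        rw [Real.rpow_add hy0, Real.rpow_one]; ring
      rw [hf]
      simp only []
      rw [mul_div_assoc', hsplit, div_le_iff₀ (by positivity)]
      have hε2 : ε ^ 2 ≤ (ε + y ^ p) ^ 2 := by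
        apply pow_le_pow_left₀ hε.le
        simpa using Real.rpow_nonneg hy0.le p
      calc ε * y ^ (2 * α + 1) = ε⁻¹ * y ^ (2 * α + 1) * ε ^ 2 := by
            field_simp
        _ ≤ ε⁻¹ * y ^ (2 * α + 1) * (ε + y ^ p) ^ 2 := by
            apply mul_le_mul_of_nonneg_left hε2
            positivity
  have h0p : (0:ℝ) ^ p = 0 := Real.zero_rpow hppos.ne'
  have hFTC := intervalIntegral.integral_eq_sub_of_hasDeriv_right_of_le hR.le hcont hderiv hint
  rw [intervalIntegral.integral_of_le hR.le, MeasureTheory.integral_Ioc_eq_integral_Ioo] at hFTC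
  rw [hFTC, hF]
  simp only [h0p, add_zero]
  have hDR : 0 < ε + R ^ p := hDpos R hR.le
  field_simp
  ring

/-- for `α ∈ (-1, ∞)`, `ε > 0`, `R > 0`,
`∫_{B_R(0)} ε |x|^{2α} (ε + |x|^{2(1+α)})⁻² dx
  = (π/(1+α)) R^{2(1+α)} / (ε + R^{2(1+α)})`. -/
theorem stmt_1 (α ε R : ℝ) (hα : -1 < α) (hε : 0 < ε) (hR : 0 < R) :
    (∫ x in Metric.ball (0 : EuclideanSpace ℝ (Fin 2)) R,
      ε * ‖x‖ ^ (2 * α) / (ε + ‖x‖ ^ (2 * (1 + α))) ^ 2)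
    = (π / (1 + α)) * R ^ (2 * (1 + α)) / (ε + R ^ (2 * (1 + α))) := by
  have h1α : (0:ℝ) < 1 + α := by linarith
  set g : ℝ → ℝ := fun y => ε * y ^ (2 * α) / (ε + y ^ (2 * (1 + α))) ^ 2 with hg
  have step1 : (∫ x in Metric.ball (0 : EuclideanSpace ℝ (Fin 2)) R,
      ε * ‖x‖ ^ (2 * α) / (ε + ‖x‖ ^ (2 * (1 + α))) ^ 2)
      = ∫ x : EuclideanSpace ℝ (Fin 2), (Set.Iio R).indicator g ‖x‖ := by
    rw [← MeasureTheory.integral_indicator measurableSet_ball]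
    congr 1
    ext x
    simp [Set.indicator, mem_ball_zero_iff, hg]
  rw [step1, MeasureTheory.integral_fun_norm_addHaar volume ((Set.Iio R).indicator g)]
  have hdim : Module.finrank ℝ (EuclideanSpace ℝ (Fin 2)) = 2 := by
    simp [finrank_euclideanSpace]
  rw [hdim]
  have hvol : volume.real (Metric.ball (0 : EuclideanSpace ℝ (Fin 2)) 1) = π := by
    rw [measureReal_def, EuclideanSpace.volume_ball]
    norm_num [Fintype.card_fin, Real.Gamma_two, Real.sq_sqrt Real.pi_pos.le,
      ENNReal.toReal_ofReal Real.pi_pos.le]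
  rw [hvol]
  have hinner : (∫ y in Set.Ioi (0:ℝ), y ^ (2 - 1) • (Set.Iio R).indicator g y)
      = ∫ y in Set.Ioo (0:ℝ) R, y * g y := by
    have : ∀ y : ℝ, y ^ (2 - 1) • (Set.Iio R).indicator g y
        = (Set.Iio R).indicator (fun y => y * g y) y := by
      intro y
      simp [Set.indicator_apply, smul_eq_mul]
    simp_rw [this]
    rw [MeasureTheory.setIntegral_indicator measurableSet_Iio, Set.Ioi_inter_Iio]
  rw [hinner, aux_1d α ε R hα hε hR]
  rw [nsmul_eq_mul, smul_eq_mul]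
  have hDR : 0 < ε + R ^ (2 * (1 + α)) :=
    add_pos_of_pos_of_nonneg hε (Real.rpow_nonneg hR.le _)
  field_simp
  ring
end

section
/- Let β > 0, c > 0 and R > 0. Then ∫_{B_R(0)} 16·β²·c²·|x|^{4β−2} · (1 + c·|x|^{2β})^{−2} dx = 16πβ·( log(1 + c·R^{2β}) − c·R^{2β}/(1 + c·R^{2β}) ), where the integral is over the open Euclidean ball B_R(0) ⊂ ℝ². (The integrand equals |∇φ(x)|² for the radial function φ(x) = −2·log(1 + c·|x|^{2β}) away from the origin.) -/
open MeasureTheory Real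

open MeasureTheory Real

lemma oneDim (β c R : ℝ) (hβ : 0 < β) (hc : 0 < c) (hR : 0 < R) :
    ∫ y in (0:ℝ)..R, 16 * β ^ 2 * c ^ 2 * y ^ (4 * β - 1) / (1 + c * y ^ (2 * β)) ^ 2
      = 8 * β * (Real.log (1 + c * R ^ (2 * β)) - c * R ^ (2 * β) / (1 + c * R ^ (2 * β))) := by
  set F : ℝ → ℝ := fun y => 8 * β * (Real.log (1 + c * y ^ (2 * β)) - c * y ^ (2 * β) / (1 + c * y ^ (2 * β))) with hF
  have hpos : ∀ y : ℝ, 0 ≤ y → 0 < 1 + c * y ^ (2 * β) := fun y hy => by positivity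
  have hderiv : ∀ y ∈ Set.Ioo (0:ℝ) R, HasDerivAt F
      (16 * β ^ 2 * c ^ 2 * y ^ (4 * β - 1) / (1 + c * y ^ (2 * β)) ^ 2) y := by
    intro y hy
    have hy0 : 0 < y := hy.1
    have hu : HasDerivAt (fun y : ℝ => c * y ^ (2 * β)) (c * (2 * β * y ^ (2 * β - 1))) y :=
      (Real.hasDerivAt_rpow_const (Or.inl hy0.ne')).const_mul c
    have h1u : HasDerivAt (fun y : ℝ => 1 + c * y ^ (2 * β)) (c * (2 * β * y ^ (2 * β - 1))) y := by
      simpa using hu.const_add 1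
    have hne : (1 + c * y ^ (2 * β)) ≠ 0 := (hpos y hy0.le).ne'
    have hlog : HasDerivAt (fun y : ℝ => Real.log (1 + c * y ^ (2 * β)))
        (c * (2 * β * y ^ (2 * β - 1)) / (1 + c * y ^ (2 * β))) y := h1u.log hne
    have hdiv : HasDerivAt (fun y : ℝ => c * y ^ (2 * β) / (1 + c * y ^ (2 * β)))
        ((c * (2 * β * y ^ (2 * β - 1)) * (1 + c * y ^ (2 * β)) -
          c * y ^ (2 * β) * (c * (2 * β * y ^ (2 * β - 1)))) / (1 + c * y ^ (2 * β)) ^ 2) y :=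
      hu.div h1u hne
    have := ((hlog.sub hdiv).const_mul (8 * β))
    refine this.congr_deriv ?_
    have hsplit : y ^ (4 * β - 1) = y ^ (2 * β - 1) * y ^ (2 * β) := by
      rw [← Real.rpow_add hy0]; ring_nf
    rw [hsplit]
    field_simp
    ring
  have hcu : ∀ y : ℝ, ContinuousAt (fun y : ℝ => c * y ^ (2 * β)) y := by
    intro y
    have h0 : ContinuousAt (fun y : ℝ => y ^ (2 * β)) y :=
      Real.continuousAt_rpow_const y (2*β) (Or.inr (by positivity))
    exact h0.const_mul c
  have hcontu : ContinuousOn (fun y : ℝ => 1 + c * y ^ (2 * β)) (Set.Icc 0 R) := by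
    intro y _
    exact (continuousAt_const.add (hcu y)).continuousWithinAt
  have hcont : ContinuousOn F (Set.Icc 0 R) := by
    have h2 : ContinuousOn (fun y : ℝ => Real.log (1 + c * y ^ (2 * β))) (Set.Icc 0 R) :=
      ContinuousOn.log hcontu (fun y hy => (hpos y hy.1).ne')
    have h3 : ContinuousOn (fun y : ℝ => c * y ^ (2 * β) / (1 + c * y ^ (2 * β))) (Set.Icc 0 R) :=
      ContinuousOn.div (fun y hy => (hcu y).continuousWithinAt) hcontu
        (fun y hy => (hpos y hy.1).ne')
    exact continuousOn_const.mul (h2.sub h3)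
  have hint : IntervalIntegrable
      (fun y => 16 * β ^ 2 * c ^ 2 * y ^ (4 * β - 1) / (1 + c * y ^ (2 * β)) ^ 2)
      volume 0 R := by
    apply IntervalIntegrable.mono_fun
      ((intervalIntegral.intervalIntegrable_rpow' (by linarith : (-1:ℝ) < 4*β-1)).const_mul
        (16 * β ^ 2 * c ^ 2))
    · apply Measurable.aestronglyMeasurable
      fun_prop
    · rw [Filter.EventuallyLE, ae_restrict_iff' measurableSet_uIoc]
      refine Filter.Eventually.of_forall fun y hy => ?_
      rw [Set.uIoc_of_le hR.le] at hy
      have hy0 : 0 < y := hy.1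
      have h1 : (1:ℝ) ≤ 1 + c * y ^ (2 * β) := le_add_of_nonneg_right (by positivity)
      have hnum : (0:ℝ) ≤ 16 * β ^ 2 * c ^ 2 * y ^ (4 * β - 1) := by positivity
      rw [Real.norm_eq_abs, Real.norm_eq_abs, abs_of_nonneg (by positivity),
        abs_of_nonneg hnum]
      rw [div_le_iff₀ (by positivity)]
      nlinarith [Real.rpow_nonneg hy0.le (4*β-1), sq_nonneg (c * y ^ (2*β))]
  have := intervalIntegral.integral_eq_sub_of_hasDeriv_right_of_le hR.le hcont
    (fun y hy => (hderiv y hy).hasDerivWithinAt) hint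
  rw [this, hF]
  simp [Real.zero_rpow (by positivity : (2*β) ≠ 0)]


/-- for `β > 0`, `c > 0`, `R > 0`,
`∫_{B_R(0)} 16 β² c² |x|^{4β-2} (1 + c|x|^{2β})⁻² dx
  = 16πβ (log(1 + cR^{2β}) - cR^{2β}/(1 + cR^{2β}))`. -/
theorem stmt_3 (β c R : ℝ) (hβ : 0 < β) (hc : 0 < c) (hR : 0 < R) :
    (∫ x in Metric.ball (0 : EuclideanSpace ℝ (Fin 2)) R,
      16 * β ^ 2 * c ^ 2 * ‖x‖ ^ (4 * β - 2) / (1 + c * ‖x‖ ^ (2 * β)) ^ 2)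
    = 16 * π * β *
        (Real.log (1 + c * R ^ (2 * β)) - c * R ^ (2 * β) / (1 + c * R ^ (2 * β))) := by
  have step1 : (∫ x in Metric.ball (0 : EuclideanSpace ℝ (Fin 2)) R,
      16 * β ^ 2 * c ^ 2 * ‖x‖ ^ (4 * β - 2) / (1 + c * ‖x‖ ^ (2 * β)) ^ 2)
      = ∫ x : EuclideanSpace ℝ (Fin 2), Set.indicator (Set.Iio R)
          (fun r => 16 * β ^ 2 * c ^ 2 * r ^ (4 * β - 2) / (1 + c * r ^ (2 * β)) ^ 2) ‖x‖ := by
    rw [← integral_indicator measurableSet_ball]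
    congr 1
    ext x
    by_cases hx : x ∈ Metric.ball (0 : EuclideanSpace ℝ (Fin 2)) R
    · rw [Set.indicator_of_mem hx, Set.indicator_of_mem (by
        simpa [Metric.mem_ball, dist_zero_right] using hx)]
    · rw [Set.indicator_of_notMem hx, Set.indicator_of_notMem (by
        simpa [Metric.mem_ball, dist_zero_right] using hx)]
  rw [step1, integral_fun_norm_addHaar volume (Set.indicator (Set.Iio R)
      (fun r => 16 * β ^ 2 * c ^ 2 * r ^ (4 * β - 2) / (1 + c * r ^ (2 * β)) ^ 2))]
  have hdim : Module.finrank ℝ (EuclideanSpace ℝ (Fin 2)) = 2 := finrank_euclideanSpace_fin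
  rw [hdim]
  have hvol : (volume (Metric.ball (0 : EuclideanSpace ℝ (Fin 2)) 1)).toReal = π := by
    rw [EuclideanSpace.volume_ball]
    simp only [Fintype.card_fin, ENNReal.ofReal_one, one_pow, one_mul,
      Real.sq_sqrt Real.pi_nonneg]
    rw [show ((2:ℕ):ℝ)/2+1 = 2 by norm_num, Real.Gamma_two, div_one,
      ENNReal.toReal_ofReal Real.pi_nonneg]
  rw [measureReal_def, hvol]
  have step2 : (∫ y in Set.Ioi (0:ℝ), y ^ (2 - 1) • Set.indicator (Set.Iio R)
        (fun r => 16 * β ^ 2 * c ^ 2 * r ^ (4 * β - 2) / (1 + c * r ^ (2 * β)) ^ 2) y)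
      = ∫ y in (0:ℝ)..R, 16 * β ^ 2 * c ^ 2 * y ^ (4 * β - 1) / (1 + c * y ^ (2 * β)) ^ 2 := by
    have h1 : ∀ y : ℝ, y ^ (2 - 1) • Set.indicator (Set.Iio R)
          (fun r => 16 * β ^ 2 * c ^ 2 * r ^ (4 * β - 2) / (1 + c * r ^ (2 * β)) ^ 2) y
        = Set.indicator (Set.Iio R)
          (fun r => r * (16 * β ^ 2 * c ^ 2 * r ^ (4 * β - 2) / (1 + c * r ^ (2 * β)) ^ 2)) y := by
      intro y
      simp only [pow_one, smul_eq_mul, Set.indicator]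
      split <;> simp
    simp_rw [h1]
    rw [setIntegral_indicator measurableSet_Iio, Set.Ioi_inter_Iio,
      intervalIntegral.integral_of_le hR.le, integral_Ioc_eq_integral_Ioo]
    apply setIntegral_congr_fun measurableSet_Ioo
    intro y hy
    have hy0 : 0 < y := hy.1
    have hsplit : y ^ (4 * β - 1) = y * y ^ (4 * β - 2) := by
      nth_rewrite 2 [← Real.rpow_one y]
      rw [← Real.rpow_add hy0]; ring_nf
    dsimp only
    rw [hsplit]; ring
  rw [step2, oneDim β c R hβ hc hR, nsmul_eq_mul, smul_eq_mul]
  ring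
end

section
/- Let α ∈ (−1, ∞). For ε ∈ (0, 1) set r_ε = 1/(−log ε). Then lim_{ε→0⁺} ∫_{B_{r_ε}(0)} log( ε + |x|^{2(1+α)} ) dx = 0, where the integral is over the open Euclidean ball B_{r_ε}(0) ⊂ ℝ². -/
open MeasureTheory Real Filter

/-- for `α ∈ (-1, ∞)` and `r_ε = 1/(-log ε)` for `ε ∈ (0,1)`,
`∫_{B_{r_ε}(0)} log(ε + |x|^{2(1+α)}) dx → 0` as `ε → 0⁺`. -/
theorem stmt_10 (α : ℝ) (hα : -1 < α) :
    Tendsto (fun ε : ℝ =>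
      ∫ x in Metric.ball (0 : EuclideanSpace ℝ (Fin 2)) (1 / (-Real.log ε)),
        Real.log (ε + ‖x‖ ^ (2 * (1 + α))))
      (nhdsWithin 0 (Set.Ioo 0 1)) (nhds 0) := by
  set E := EuclideanSpace ℝ (Fin 2) with hE
  set c : ℝ := (volume (Metric.ball (0 : E) 1)).toReal with hc
  have hc0 : 0 ≤ c := ENNReal.toReal_nonneg
  have hL : Tendsto (fun ε : ℝ => -Real.log ε) (nhdsWithin 0 (Set.Ioo 0 1)) atTop := by
    have h1 : Tendsto Real.log (nhdsWithin 0 (Set.Ioo (0:ℝ) 1)) atBot :=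
      Real.tendsto_log_nhdsGT_zero.mono_left
        (nhdsWithin_mono _ (fun x hx => hx.1))
    exact tendsto_neg_atTop_iff.mpr h1
  have hg : Tendsto (fun ε : ℝ => (Real.log 2 + (-Real.log ε)) * ((1/(-Real.log ε))^2 * c))
      (nhdsWithin 0 (Set.Ioo 0 1)) (nhds 0) := by
    have h0 : Tendsto (fun L : ℝ => (Real.log 2 * (1/L) * (1/L) + 1/L) * c) atTop (nhds 0) := by
      have hi : Tendsto (fun L : ℝ => 1/L) atTop (nhds (0:ℝ)) := by
        simpa [one_div] using tendsto_inv_atTop_zero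
      have h2 := (((tendsto_const_nhds (x := Real.log 2)).mul hi).mul hi).add hi
      have h3 := h2.mul (tendsto_const_nhds (x := c))
      simpa using h3
    have heq : ∀ᶠ L : ℝ in atTop,
        (Real.log 2 * (1/L) * (1/L) + 1/L) * c = (Real.log 2 + L) * ((1/L)^2 * c) := by
      filter_upwards [eventually_gt_atTop (0:ℝ)] with L hLpos
      field_simp
    exact ((h0.congr' heq).comp hL : _)
  apply squeeze_zero_norm' ?_ hg
  filter_upwards [eventually_mem_nhdsWithin, hL.eventually_ge_atTop 1] with ε hε hL1
  set L : ℝ := -Real.log ε with hLdef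
  have hLpos : 0 < L := lt_of_lt_of_le one_pos hL1
  set r : ℝ := 1 / L with hr
  have hrpos : 0 < r := by positivity
  have hr1 : r ≤ 1 := by
    rw [hr, div_le_one hLpos]; exact hL1
  have hp : 0 < 2 * (1 + α) := by linarith
  have hεpos : 0 < ε := hε.1
  have hε1 : ε < 1 := hε.2
  have hbound : ∀ x ∈ Metric.ball (0 : E) r,
      ‖Real.log (ε + ‖x‖ ^ (2 * (1 + α)))‖ ≤ Real.log 2 + L := by
    intro x hx
    have hxr : ‖x‖ < r := by simpa using hx
    have ht0 : 0 ≤ ‖x‖ ^ (2 * (1 + α)) := Real.rpow_nonneg (norm_nonneg x) _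
    have ht1 : ‖x‖ ^ (2 * (1 + α)) ≤ 1 :=
      Real.rpow_le_one (norm_nonneg x) (le_trans hxr.le hr1) hp.le
    have hlo : Real.log ε ≤ Real.log (ε + ‖x‖ ^ (2 * (1 + α))) :=
      Real.log_le_log hεpos (by linarith)
    have hhi : Real.log (ε + ‖x‖ ^ (2 * (1 + α))) ≤ Real.log 2 :=
      Real.log_le_log (by linarith) (by linarith)
    have hlog2 : 0 ≤ Real.log 2 := Real.log_nonneg one_le_two
    rw [Real.norm_eq_abs, abs_le]
    constructor
    · have : -L = Real.log ε := by rw [hLdef]; ring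
      linarith
    · linarith
  have hmeas : volume (Metric.ball (0 : E) r) < ⊤ := measure_ball_lt_top
  have key := norm_setIntegral_le_of_norm_le_const hmeas hbound
  have hvol : (volume (Metric.ball (0 : E) r)).toReal = r ^ 2 * c := by
    rw [Measure.addHaar_ball volume (0 : E) hrpos.le]
    rw [ENNReal.toReal_mul, ENNReal.toReal_ofReal (by positivity)]
    rw [show Module.finrank ℝ E = 2 from finrank_euclideanSpace_fin, hc]
  calc ‖∫ x in Metric.ball (0 : E) r, Real.log (ε + ‖x‖ ^ (2 * (1 + α)))‖
      ≤ (Real.log 2 + L) * (volume (Metric.ball (0 : E) r)).toReal := key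
    _ = (Real.log 2 + L) * (r ^ 2 * c) := by rw [hvol]
end
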